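/- arXiv:1011.1945 — 2 statements merged into one kernel-verified Lean document; each statement's English description precedes it below -/
import Mathlib

section
/- For coprime positive integers s, t ≥ 2, every partition that is simultaneously s-core and t-core has all hook lengths at most st - s - t. -/
/-- A partition represented as a weakly decreasing list of positive parts. -/
def IsPartitionList (l : List ℕ) : Prop :=
  l.Pairwise (· ≥ ·) ∧ ∀ p ∈ l, 0 < p

/-- Hook length of the cell in row `i`, column `j` (both 0-indexed). -/
def hookLen (l : List ℕ) (i j : ℕ) : ℕ :=
  (l.getD i 0 - j) + (l.drop (i + 1)).countP (fun a => decide (j < a))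

/-- The hookset of a partition: the set of its hook lengths. -/
def hookset (l : List ℕ) : Set ℕ :=
  {h | ∃ i j, i < l.length ∧ j < l.getD i 0 ∧ h = hookLen l i j}

/-- `l` is a `t`-core: no hook length of `l` is divisible by `t`. -/
def IsCore (l : List ℕ) (t : ℕ) : Prop := ∀ h ∈ hookset l, ¬ t ∣ h

/-- A numerical set: contains 0 and has finite complement in ℕ. -/
def NumericalSet (S : Set ℕ) : Prop := 0 ∈ S ∧ Sᶜ.Finite

/-- The atom monoid of a numerical set. -/
def atomMonoid (S : Set ℕ) : Set ℕ := {n | ∀ s ∈ S, n + s ∈ S}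

/-- The set of positions of east steps of the profile of the partition `l`
(step `i` is north exactly when `i = l[a] + (length - 1 - a)` for some row `a`). -/
def pathSet (l : List ℕ) : Set ℕ :=
  {i | ¬ ∃ a, a < l.length ∧ i = l.getD a 0 + (l.length - 1 - a)}

/-- The staircase partition `(k, k-1, ..., 2, 1)`. -/
def staircase (k : ℕ) : List ℕ := (List.range k).reverse.map (· + 1)

def beta' (l : List ℕ) (a : ℕ) : ℕ := l.getD a 0 + (l.length - 1 - a)

lemma getD_mono (l : List ℕ) (hl : l.Pairwise (· ≥ ·)) {a b : ℕ} (hab : a ≤ b) :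
    l.getD b 0 ≤ l.getD a 0 := by
  rcases lt_or_ge b l.length with hb | hb
  · rw [List.getD_eq_getElem l 0 hb, List.getD_eq_getElem l 0 (lt_of_le_of_lt hab hb)]
    rcases eq_or_lt_of_le hab with rfl | h2
    · exact le_refl _
    · exact List.pairwise_iff_getElem.mp hl a b (lt_trans h2 hb) hb h2
  · rw [List.getD_eq_default l 0 hb]; exact Nat.zero_le _

lemma beta'_spacing (l : List ℕ) (hl : l.Pairwise (· ≥ ·)) {a b : ℕ} (hab : a ≤ b)
    (hb : b < l.length) : beta' l b + (b - a) ≤ beta' l a := by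
  have h1 : l.getD b 0 ≤ l.getD a 0 := getD_mono l hl hab
  unfold beta'; omega

lemma countP_drop (l : List ℕ) (p : ℕ → Bool) :
    ∀ m k, l.length - k = m →
      (l.drop k).countP p
        = ((Finset.Ico k l.length).filter (fun a => p (l.getD a 0) = true)).card := by
  intro m
  induction m with
  | zero =>
    intro k hk
    have hle : l.length ≤ k := by omega
    rw [List.drop_eq_nil_of_le hle, Finset.Ico_eq_empty (by omega)]
    simp
  | succ m ih =>
    intro k hk
    have hkn : k < l.length := by omega
    rw [List.drop_eq_getElem_cons hkn, List.countP_cons, ih (k+1) (by omega),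
      ← Finset.insert_Ico_add_one_left_eq_Ico hkn, Finset.filter_insert]
    have hget : l.getD k 0 = l[k] := List.getD_eq_getElem l 0 hkn
    rw [hget]
    split_ifs with hq
    · rw [Finset.card_insert_of_notMem (by simp)]
    · rfl

lemma countP_drop' (l : List ℕ) (p : ℕ → Bool) (k : ℕ) :
    (l.drop k).countP p
      = ((Finset.Ico k l.length).filter (fun a => p (l.getD a 0) = true)).card :=
  countP_drop l p _ k rfl

lemma hookLen_eq_card (l : List ℕ) (i j : ℕ) :
    hookLen l i j = (l.getD i 0 - j)
      + ((Finset.Ico (i+1) l.length).filter (fun a => j < l.getD a 0)).card := by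
  rw [hookLen, countP_drop']
  congr 1
  apply congrArg
  apply Finset.filter_congr
  intro x _
  simp

lemma hook_repr (l : List ℕ) (hl : l.Pairwise (· ≥ ·)) {i j : ℕ} (hi : i < l.length)
    (hj : j < l.getD i 0) :
    ∃ m, m ∈ pathSet l ∧ m < beta' l i ∧ hookLen l i j = beta' l i - m := by
  set n := l.length with hn
  set d := ((Finset.Ico (i+1) n).filter (fun a => l.getD a 0 ≤ j)).card with hd
  set c := ((Finset.Ico (i+1) n).filter (fun a => j < l.getD a 0)).card with hc
  have hsplit : c + d = n - (i+1) := by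
    rw [hc, hd]
    have h1 : (Finset.Ico (i+1) n).filter (fun a => l.getD a 0 ≤ j)
        = (Finset.Ico (i+1) n).filter (fun a => ¬ j < l.getD a 0) := by
      apply Finset.filter_congr; intro x _; simp [not_lt]
    rw [h1, Finset.card_filter_add_card_filter_not, Nat.card_Ico]
  have hhook : hookLen l i j = (l.getD i 0 - j) + c := hookLen_eq_card l i j
  have hbi : beta' l i = l.getD i 0 + (n - 1 - i) := rfl
  refine ⟨j + d, ?_, by omega, by omega⟩
  rintro ⟨a', ha'n, hma'⟩
  have hba' : l.getD a' 0 + (n - 1 - a') = beta' l a' := rfl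
  rcases le_or_gt a' i with hcase | hcase
  · have hsp := beta'_spacing l hl hcase hi
    unfold beta' at hsp
    omega
  · rcases le_or_gt (l.getD a' 0) j with hla' | hla'
    · have hsub : Finset.Ico a' n ⊆ (Finset.Ico (i+1) n).filter (fun a => l.getD a 0 ≤ j) := by
        intro x hx
        rw [Finset.mem_Ico] at hx
        rw [Finset.mem_filter, Finset.mem_Ico]
        exact ⟨⟨by omega, hx.2⟩, le_trans (getD_mono l hl hx.1) hla'⟩
      have hcard := Finset.card_le_card hsub
      rw [Nat.card_Ico, ← hd] at hcard
      omega
    · have hsub : (Finset.Ico (i+1) n).filter (fun a => l.getD a 0 ≤ j)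
          ⊆ Finset.Ico (a'+1) n := by
        intro x hx
        rw [Finset.mem_filter, Finset.mem_Ico] at hx
        rw [Finset.mem_Ico]
        refine ⟨?_, hx.1.2⟩
        by_contra hxa
        push_neg at hxa
        have := getD_mono l hl (show x ≤ a' by omega)
        omega
      have hcard := Finset.card_le_card hsub
      rw [Nat.card_Ico, ← hd] at hcard
      omega

lemma repr_hook (l : List ℕ) (hl : l.Pairwise (· ≥ ·)) {i m : ℕ} (hi : i < l.length)
    (hm : m ∈ pathSet l) (hmi : m < beta' l i) : beta' l i - m ∈ hookset l := by
  set n := l.length with hn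
  have hne : ∀ b, b < n → m ≠ beta' l b := by
    intro b hb he
    exact hm ⟨b, hb, he⟩
  set T := (Finset.range n).filter (fun a => beta' l a < m) with hT
  set a0 := T.card with ha0
  have hup : ∀ b ∈ T, ∀ c, b ≤ c → c < n → c ∈ T := by
    intro b hb c hbc hc
    rw [hT, Finset.mem_filter, Finset.mem_range] at hb ⊢
    have := beta'_spacing l hl hbc hc
    exact ⟨hc, by omega⟩
  have hTIco : T = Finset.Ico (n - a0) n := by
    ext b
    rw [Finset.mem_Ico]
    constructor
    · intro hb
      have hbn : b < n := by
        have := (Finset.mem_filter.mp hb).1; rwa [Finset.mem_range] at this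
      have hsub : Finset.Ico b n ⊆ T := by
        intro c hc
        rw [Finset.mem_Ico] at hc
        exact hup b hb c hc.1 hc.2
      have := Finset.card_le_card hsub
      rw [Nat.card_Ico, ← ha0] at this
      omega
    · rintro ⟨hb1, hb2⟩
      by_contra hb
      have hsub : T ⊆ Finset.Ico (b+1) n := by
        intro c hc
        rw [Finset.mem_Ico]
        have hcn : c < n := by
          have := (Finset.mem_filter.mp hc).1; rwa [Finset.mem_range] at this
        refine ⟨?_, hcn⟩
        by_contra hcb
        push_neg at hcb
        exact hb (hup c hc b (by omega) hb2)
      have := Finset.card_le_card hsub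
      rw [Nat.card_Ico, ← ha0] at this
      omega
  have ha0m : a0 ≤ m := by
    rw [ha0, ← Finset.card_range m]
    apply Finset.card_le_card_of_injOn (beta' l)
    · intro b hb
      rw [Finset.mem_coe, Finset.mem_range]
      exact (Finset.mem_filter.mp hb).2
    · intro b1 hb1 b2 hb2 heq
      simp only [hT, Finset.coe_filter, Set.mem_setOf_eq, Finset.mem_range] at hb1 hb2
      rcases lt_trichotomy b1 b2 with h | h | h
      · have := beta'_spacing l hl (le_of_lt h) hb2.1; omega
      · exact h
      · have := beta'_spacing l hl (le_of_lt h) hb1.1; omega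
  have hK1 : ∀ a, a < n → beta' l a < m → beta' l a + (a - (n - a0)) < m := by
    intro a ha hba
    have haT : a ∈ T := by
      rw [hT, Finset.mem_filter, Finset.mem_range]; exact ⟨ha, hba⟩
    have ha0pos : 1 ≤ a0 := by
      rw [ha0]
      exact Finset.card_pos.mpr ⟨a, haT⟩
    have hna0 : n - a0 ∈ T := by
      rw [hTIco, Finset.mem_Ico]
      have : a ∈ Finset.Ico (n - a0) n := by rw [← hTIco]; exact haT
      rw [Finset.mem_Ico] at this
      omega
    have hlow : beta' l (n - a0) < m := (Finset.mem_filter.mp hna0).2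
    have hge : n - a0 ≤ a := by
      have : a ∈ Finset.Ico (n - a0) n := by rw [← hTIco]; exact haT
      rw [Finset.mem_Ico] at this; exact this.1
    have hsp := beta'_spacing l hl hge ha
    omega
  have hK2 : ∀ a, a < n → ¬ (beta' l a < m) → m + (n - a0 - a) ≤ beta' l a := by
    intro a ha hba
    have haT : a ∉ T := by
      rw [hT, Finset.mem_filter, Finset.mem_range]
      exact fun hc => hba hc.2
    have halt : a < n - a0 := by
      rw [hTIco, Finset.mem_Ico] at haT
      omega
    set b := n - a0 - 1 with hb
    have hbn : b < n := by omega
    have hbT : b ∉ T := by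
      rw [hTIco, Finset.mem_Ico]
      omega
    have hbm : ¬ (beta' l b < m) := by
      rw [hT, Finset.mem_filter, Finset.mem_range] at hbT
      intro hc
      exact hbT ⟨hbn, hc⟩
    have hbm' : m < beta' l b := lt_of_le_of_ne (by omega) (hne b hbn)
    have hsp := beta'_spacing l hl (show a ≤ b by omega) hbn
    omega
  -- now construct the hook
  have hiT : i < n - a0 := by
    have hiT' : i ∉ T := by
      rw [hT, Finset.mem_filter, Finset.mem_range]
      intro hc
      omega
    rw [hTIco, Finset.mem_Ico] at hiT'
    omega
  have hK2i := hK2 i hi (by omega)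
  have hbi : beta' l i = l.getD i 0 + (n - 1 - i) := rfl
  set j := m - a0 with hj
  have hji : j < l.getD i 0 := by omega
  have hfilter : (Finset.Ico (i+1) n).filter (fun a => j < l.getD a 0)
      = Finset.Ico (i+1) (n - a0) := by
    ext x
    rw [Finset.mem_filter, Finset.mem_Ico, Finset.mem_Ico]
    constructor
    · rintro ⟨⟨hx1, hx2⟩, hjx⟩
      refine ⟨hx1, ?_⟩
      by_contra hxa
      push_neg at hxa
      have hxT : x ∈ T := by
        rw [hTIco, Finset.mem_Ico]; exact ⟨hxa, hx2⟩
      have hbx : beta' l x < m := (Finset.mem_filter.mp hxT).2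
      have hK1x := hK1 x hx2 hbx
      have hbx' : beta' l x = l.getD x 0 + (n - 1 - x) := rfl
      omega
    · rintro ⟨hx1, hx2⟩
      have hxn : x < n := by omega
      refine ⟨⟨hx1, hxn⟩, ?_⟩
      have hxT : x ∉ T := by
        rw [hTIco, Finset.mem_Ico]; omega
      have hbx : ¬ (beta' l x < m) := by
        rw [hT, Finset.mem_filter, Finset.mem_range] at hxT
        intro hc; exact hxT ⟨hxn, hc⟩
      have hK2x := hK2 x hxn hbx
      have hbx' : beta' l x = l.getD x 0 + (n - 1 - x) := rfl
      omega
  refine ⟨i, j, hi, hji, ?_⟩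
  rw [hookLen_eq_card, hfilter, Nat.card_Ico]
  omega

lemma hook_pos (l : List ℕ) {h : ℕ} (hh : h ∈ hookset l) : 0 < h := by
  obtain ⟨i, j, hi, hj, he⟩ := hh
  rw [he, hookLen]
  omega

lemma hook_closure (l : List ℕ) (hl : l.Pairwise (· ≥ ·)) {h a b : ℕ}
    (hh : h ∈ hookset l) (hab : h = a + b) (ha : 1 ≤ a) (hb : 1 ≤ b) :
    a ∈ hookset l ∨ b ∈ hookset l := by
  obtain ⟨i, j, hi, hj, he⟩ := hh
  obtain ⟨m, hmp, hml, hhm⟩ := hook_repr l hl hi hj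
  have hβ : h = beta' l i - m := by rw [he, hhm]
  have haβ : a ≤ beta' l i := by omega
  by_cases hx : (beta' l i - a) ∈ pathSet l
  · left
    have hk := repr_hook l hl hi hx (by omega)
    rwa [show beta' l i - (beta' l i - a) = a by omega] at hk
  · right
    simp only [pathSet, Set.mem_setOf_eq, not_not] at hx
    obtain ⟨a', ha'n, heq⟩ := hx
    have heqβ : beta' l i - a = beta' l a' := heq
    have hk := repr_hook l hl ha'n hmp (show m < beta' l a' by omega)
    rwa [show beta' l a' - m = b by omega] at hk

theorem stmt11 (s t : ℕ) (hs : 2 ≤ s) (ht : 2 ≤ t) (hco : Nat.Coprime s t)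
    (l : List ℕ) (hl : IsPartitionList l) (hsc : IsCore l s) (htc : IsCore l t) :
    ∀ h ∈ hookset l, h ≤ s * t - s - t := by
  intro h hh
  by_contra hgt
  push_neg at hgt
  have hfrob := frobeniusNumber_pair hco hs ht
  have hrep : h ∈ AddSubmonoid.closure ({s, t} : Set ℕ) := by
    by_contra hc
    exact absurd (hfrob.2 hc) (by omega)
  rw [AddSubmonoid.mem_closure_pair] at hrep
  obtain ⟨p, q, hpq⟩ := hrep
  simp only [smul_eq_mul] at hpq
  have hpos := hook_pos l hh
  rcases Nat.eq_zero_or_pos p with hp | hp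
  · rcases Nat.eq_zero_or_pos q with hq | hq
    · subst hp; subst hq; simp at hpq; omega
    · exact htc h hh ⟨q, by subst hp; simp at hpq; rw [← hpq]; ring⟩
  · rcases Nat.eq_zero_or_pos q with hq | hq
    · exact hsc h hh ⟨p, by subst hq; simp at hpq; rw [← hpq]; ring⟩
    · rcases hook_closure l hl.1 hh hpq.symm
        (Nat.one_le_iff_ne_zero.mpr (by positivity))
        (Nat.one_le_iff_ne_zero.mpr (by positivity)) with hc | hc
      · exact hsc _ hc ⟨p, mul_comm _ _⟩
      · exact htc _ hc ⟨q, mul_comm _ _⟩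
end

section
/- The number of partitions of n that are 3-cores with complete hookset (i.e., the hookset equals an initial segment {1,2,4,5,7,8,...,N} of the non-multiples of 3) has generating function 1 + q + 2·Σ_{k≥2} (q^{k²} + q^{k²-k}). Equivalently, for n ≥ 2 there are exactly two such partitions if n = k² or n = k² - k for some k ≥ 2, and none otherwise. -/
/-- A 3-core with complete hookset: the hookset is an initial segment of the
positive non-multiples of 3. -/
def CompleteHookset3 (l : List ℕ) : Prop :=
  IsCore l 3 ∧ ∃ N : ℕ, hookset l = {h | 0 < h ∧ ¬ 3 ∣ h ∧ h ≤ N}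

/-- beta values -/
def bet (l : List ℕ) (i : ℕ) : ℕ := l.getD i 0 + (l.length - 1 - i)

def BS (l : List ℕ) : Finset ℕ := (Finset.range l.length).image (bet l)

lemma getD_lt (l : List ℕ) (i : ℕ) (hi : i < l.length) : l.getD i 0 = l[i] := by
  simp [List.getD_eq_getElem?_getD, List.getElem?_eq_getElem hi]

lemma part_anti {l : List ℕ} (hl : IsPartitionList l) {i j : ℕ} (hij : i ≤ j) :
    l.getD j 0 ≤ l.getD i 0 := by
  rcases eq_or_lt_of_le hij with rfl | hij'
  · exact le_rfl
  by_cases hj : j < l.length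
  · have hi : i < l.length := lt_trans hij' hj
    rw [getD_lt l i hi, getD_lt l j hj]
    exact (List.pairwise_iff_getElem.1 hl.1) i j hi hj hij'
  · rw [List.getD_eq_default]
    · exact Nat.zero_le _
    · omega

lemma part_pos {l : List ℕ} (hl : IsPartitionList l) {i : ℕ} (hi : i < l.length) :
    0 < l.getD i 0 := by
  rw [getD_lt l i hi]
  exact hl.2 _ (List.getElem_mem _)

lemma bet_pos {l : List ℕ} (hl : IsPartitionList l) {i : ℕ} (hi : i < l.length) :
    0 < bet l i := by
  have := part_pos hl hi; unfold bet; omega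

lemma bet_strict_anti {l : List ℕ} (hl : IsPartitionList l) {i j : ℕ} (hij : i < j)
    (hj : j < l.length) : bet l j < bet l i := by
  have h1 := part_anti hl (le_of_lt hij)
  unfold bet; omega

lemma mem_BS {l : List ℕ} {x : ℕ} : x ∈ BS l ↔ ∃ i, i < l.length ∧ bet l i = x := by
  simp [BS]

lemma card_BS {l : List ℕ} (hl : IsPartitionList l) : (BS l).card = l.length := by
  rw [BS, Finset.card_image_of_injOn, Finset.card_range]
  intro i hi j hj hij
  simp only [Finset.mem_coe, Finset.mem_range] at hi hj
  by_contra hne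
  rcases lt_or_gt_of_ne hne with h | h
  · exact absurd hij (ne_of_gt (bet_strict_anti hl h hj))
  · exact absurd hij (ne_of_lt (bet_strict_anti hl h hi))

/-- complement position function -/
def cfun (l : List ℕ) (i j : ℕ) : ℕ := j + (l.drop (i + 1)).countP (fun a => decide (a ≤ j))

lemma cnt_split {l : List ℕ} (i j : ℕ) :
    (l.drop (i + 1)).countP (fun a => decide (j < a)) +
      (l.drop (i + 1)).countP (fun a => decide (a ≤ j)) = l.length - (i + 1) := by
  have h : ∀ L : List ℕ, L.countP (fun a => decide (j < a)) +
      L.countP (fun a => decide (a ≤ j)) = L.length := by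
    intro L
    induction L with
    | nil => simp
    | cons x t ih =>
      simp only [List.countP_cons, List.length_cons]
      rcases le_or_gt x j with h | h
      · have h2 : ¬ j < x := by omega
        simp [h, h2]
        omega
      · have h2 : ¬ x ≤ j := by omega
        simp [h, h2]
        omega
  have h2 := h (l.drop (i + 1))
  rw [List.length_drop] at h2
  omega

lemma key1 {l : List ℕ} {i j : ℕ} (hi : i < l.length) (hj : j < l.getD i 0) :
    hookLen l i j + cfun l i j = bet l i := by
  have h := cnt_split (l := l) i j
  unfold hookLen cfun bet
  omega

lemma key2 {l : List ℕ} {i j : ℕ} (hi : i < l.length) (hj : j < l.getD i 0) :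
    cfun l i j < bet l i := by
  have h := List.countP_le_length (p := fun a => decide (a ≤ j)) (l := l.drop (i + 1))
  rw [List.length_drop] at h
  unfold cfun bet
  omega

lemma key3 {l : List ℕ} (hl : IsPartitionList l) {i j : ℕ} (hi : i < l.length)
    (hj : j < l.getD i 0) : cfun l i j ∉ BS l := by
  intro hmem
  rw [mem_BS] at hmem
  obtain ⟨a, ha, hba⟩ := hmem
  rcases le_or_gt a i with hai | hai
  · -- bet a ≥ bet i > cfun
    have h1 : bet l i ≤ bet l a := by
      rcases eq_or_lt_of_le hai with rfl | h
      · exact le_rfl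
      · exact le_of_lt (bet_strict_anti hl h hi)
    have := key2 (l := l) hi hj
    omega
  · rcases le_or_gt (l.getD a 0) j with hla | hla
    · -- cfun ≥ j + (m - a) ≥ bet a + 1
      have hsub : l.drop a = (l.drop (i + 1)).drop (a - (i + 1)) := by
        rw [List.drop_drop]
        congr 1
        omega
      have hcount : (l.drop a).countP (fun x => decide (x ≤ j)) = (l.drop a).length := by
        rw [List.countP_eq_length]
        intro x hx
        rw [List.mem_iff_getElem] at hx
        obtain ⟨t, ht, rfl⟩ := hx
        have hlen : (l.drop a).length = l.length - a := List.length_drop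
        have : (l.drop a)[t] = l[a + t] := by
          rw [List.getElem_drop]
        rw [this]
        have h2 : l.getD (a + t) 0 ≤ l.getD a 0 := part_anti hl (by omega)
        rw [getD_lt l (a + t) (by omega)] at h2
        simp only [decide_eq_true_eq]
        omega
      have hle : (l.drop a).countP (fun x => decide (x ≤ j)) ≤
          (l.drop (i + 1)).countP (fun x => decide (x ≤ j)) := by
        rw [hsub]
        exact (List.drop_sublist _ _).countP_le
      rw [hcount, List.length_drop] at hle
      unfold cfun at hba
      unfold bet at hba
      omega
    · -- cfun ≤ j + (m - 1 - a) < bet a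
      have hsplit : l.drop (i + 1) =
          (l.drop (i + 1)).take (a - i) ++ (l.drop (i + 1)).drop (a - i) := by
        rw [List.take_append_drop]
      have hz : ((l.drop (i + 1)).take (a - i)).countP (fun x => decide (x ≤ j)) = 0 := by
        rw [List.countP_eq_zero]
        intro x hx
        rw [List.mem_iff_getElem] at hx
        obtain ⟨t, ht, rfl⟩ := hx
        rw [List.length_take, List.length_drop] at ht
        have ht2 : t < a - i := lt_of_lt_of_le ht (min_le_left _ _)
        have ht3 : i + 1 + t < l.length := by
          have := lt_of_lt_of_le ht (min_le_right _ _)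
          omega
        have : ((l.drop (i + 1)).take (a - i))[t] = l[i + 1 + t] := by
          rw [List.getElem_take, List.getElem_drop]
        rw [this]
        have h2 : l.getD a 0 ≤ l.getD (i + 1 + t) 0 := part_anti hl (by omega)
        rw [getD_lt l (i + 1 + t) ht3] at h2
        simp only [decide_eq_true_eq]
        omega
      have hcnt : (l.drop (i + 1)).countP (fun x => decide (x ≤ j)) ≤ l.length - (a + 1) := by
        conv_lhs => rw [hsplit]
        rw [List.countP_append, hz, List.drop_drop]
        have h3 := List.countP_le_length (p := fun x => decide (x ≤ j))
          (l := l.drop (i + 1 + (a - i)))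
        rw [List.length_drop] at h3
        omega
      unfold cfun at hba
      unfold bet at hba
      omega

lemma key4 {l : List ℕ} (i : ℕ) : StrictMono (cfun l i) := by
  intro j1 j2 h
  unfold cfun
  have : (l.drop (i + 1)).countP (fun a => decide (a ≤ j1)) ≤
      (l.drop (i + 1)).countP (fun a => decide (a ≤ j2)) := by
    apply List.countP_mono_left
    intro x _
    simp only [decide_eq_true_eq]
    omega
  omega

lemma surj_c {l : List ℕ} (hl : IsPartitionList l) {i : ℕ} (hi : i < l.length) :
    (Finset.range (l.getD i 0)).image (cfun l i) = Finset.range (bet l i) \ BS l := by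
  apply Finset.eq_of_subset_of_card_le
  · intro x hx
    simp only [Finset.mem_image, Finset.mem_range] at hx
    obtain ⟨j, hj, rfl⟩ := hx
    rw [Finset.mem_sdiff, Finset.mem_range]
    exact ⟨key2 hi hj, key3 hl hi hj⟩
  · have hcard1 : ((Finset.range (l.getD i 0)).image (cfun l i)).card = l.getD i 0 := by
      rw [Finset.card_image_of_injOn ((key4 (l := l) i).injective.injOn), Finset.card_range]
    rw [hcard1]
    -- card of sdiff
    have hsub : (Finset.Ico (i + 1) l.length).image (bet l) ⊆ (Finset.range (bet l i)) ∩ BS l := by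
      intro x hx
      simp only [Finset.mem_image, Finset.mem_Ico] at hx
      obtain ⟨a, ⟨ha1, ha2⟩, rfl⟩ := hx
      rw [Finset.mem_inter, Finset.mem_range, mem_BS]
      exact ⟨bet_strict_anti hl ha1 ha2, ⟨a, ha2, rfl⟩⟩
    have hcard2 : ((Finset.Ico (i + 1) l.length).image (bet l)).card = l.length - (i + 1) := by
      rw [Finset.card_image_of_injOn, Nat.card_Ico]
      intro a ha b hb hab
      simp only [Finset.coe_Ico, Set.mem_Ico] at ha hb
      by_contra hne
      rcases lt_or_gt_of_ne hne with h | h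
      · exact absurd hab (ne_of_gt (bet_strict_anti hl h hb.2))
      · exact absurd hab (ne_of_lt (bet_strict_anti hl h ha.2))
    have hcard3 : l.length - (i + 1) ≤ ((Finset.range (bet l i)) ∩ BS l).card := by
      rw [← hcard2]
      exact Finset.card_le_card hsub
    have hcard4 := Finset.card_sdiff_add_card_inter (Finset.range (bet l i)) (BS l)
    rw [Finset.card_range] at hcard4
    have hb : bet l i = l.getD i 0 + (l.length - 1 - i) := rfl
    omega

theorem hookset_eq {l : List ℕ} (hl : IsPartitionList l) :
    hookset l = {h | ∃ b ∈ BS l, ∃ c, c < b ∧ c ∉ BS l ∧ h = b - c} := by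
  ext h
  constructor
  · rintro ⟨i, j, hi, hj, rfl⟩
    refine ⟨bet l i, mem_BS.2 ⟨i, hi, rfl⟩, cfun l i j, key2 hi hj, key3 hl hi hj, ?_⟩
    have := key1 (l := l) hi hj
    omega
  · rintro ⟨b, hb, c, hcb, hcBS, rfl⟩
    rw [mem_BS] at hb
    obtain ⟨i, hi, rfl⟩ := hb
    have hc : c ∈ Finset.range (bet l i) \ BS l := by
      rw [Finset.mem_sdiff, Finset.mem_range]; exact ⟨hcb, hcBS⟩
    rw [← surj_c hl hi] at hc
    simp only [Finset.mem_image, Finset.mem_range] at hc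
    obtain ⟨j, hj, rfl⟩ := hc
    refine ⟨i, j, hi, hj, ?_⟩
    have := key1 (l := l) hi hj
    omega

/-- the beta set of the 3-core with parameters a, b -/
def Bab (a b : ℕ) : Finset ℕ :=
  (Finset.range a).image (fun i => 3 * i + 1) ∪ (Finset.range b).image (fun i => 3 * i + 2)

lemma mem_Bab {a b x : ℕ} : x ∈ Bab a b ↔ (x % 3 = 1 ∧ x < 3 * a) ∨ (x % 3 = 2 ∧ x < 3 * b) := by
  simp only [Bab, Finset.mem_union, Finset.mem_image, Finset.mem_range]
  constructor
  · rintro (⟨i, hi, rfl⟩ | ⟨i, hi, rfl⟩)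
    · left; omega
    · right; omega
  · rintro (⟨h1, h2⟩ | ⟨h1, h2⟩)
    · left; exact ⟨x / 3, by omega, by omega⟩
    · right; exact ⟨x / 3, by omega, by omega⟩

lemma card_Bab (a b : ℕ) : (Bab a b).card = a + b := by
  rw [Bab, Finset.card_union_of_disjoint, Finset.card_image_of_injective _ (by intro x y h; simp only at h; omega),
    Finset.card_image_of_injective _ (by intro x y h; simp only at h; omega), Finset.card_range, Finset.card_range]
  rw [Finset.disjoint_left]
  rintro x hx hy
  simp only [Finset.mem_image, Finset.mem_range] at hx hy
  obtain ⟨i, _, rfl⟩ := hx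
  obtain ⟨i', _, h⟩ := hy
  omega

lemma dclosed {s : Finset ℕ} (h : ∀ x, x + 1 ∈ s → x ∈ s) : s = Finset.range s.card := by
  have hstep : ∀ d x, x + d ∈ s → x ∈ s := by
    intro d
    induction d with
    | zero => intro x hx; exact hx
    | succ d ih => intro x hx; exact ih x (h _ (by rwa [show x + d + 1 = x + (d+1) by ring]))
  symm
  apply (Finset.eq_of_subset_of_card_le _ (le_of_eq (Finset.card_range s.card))).symm
  intro x hx
  rw [Finset.mem_range]
  have hsub : Finset.range (x + 1) ⊆ s := by
    intro y hy
    rw [Finset.mem_range] at hy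
    exact hstep (x - y) y (by rwa [show y + (x - y) = x by omega])
  have := Finset.card_le_card hsub
  rw [Finset.card_range] at this
  omega

lemma core_BS {l : List ℕ} (hl : IsPartitionList l) (hcore : IsCore l 3) :
    ∃ a b, BS l = Bab a b := by
  have h0 : (0 : ℕ) ∉ BS l := by
    rw [mem_BS]
    rintro ⟨i, hi, hb⟩
    have := bet_pos hl hi
    omega
  have hhook : ∀ x ∈ BS l, ∀ c < x, c ∉ BS l → (x - c) ∈ hookset l := by
    intro x hx c hc hcn
    rw [hookset_eq hl]
    exact ⟨x, hx, c, hc, hcn, rfl⟩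
  have hmod : ∀ x ∈ BS l, x % 3 ≠ 0 := by
    intro x hx
    intro hx3
    have hxpos : 0 < x := by
      rcases Nat.eq_zero_or_pos x with rfl | h
      · exact absurd hx h0
      · exact h
    have := hcore x (by simpa using hhook x hx 0 hxpos h0)
    omega
  have hclosed : ∀ x ∈ BS l, 3 ≤ x → x - 3 ∈ BS l := by
    intro x hx h3
    by_contra hneg
    have := hcore (x - (x - 3)) (hhook x hx (x - 3) (by omega) hneg)
    have : ¬ (3 : ℕ) ∣ 3 := by rwa [show x - (x - 3) = 3 by omega] at this
    exact this dvd_rfl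
  -- the two residue class index sets
  set t1 := ((BS l).filter (fun x => x % 3 = 1)).image (fun x => x / 3) with ht1
  set t2 := ((BS l).filter (fun x => x % 3 = 2)).image (fun x => x / 3) with ht2
  have hmem1 : ∀ i, i ∈ t1 ↔ 3 * i + 1 ∈ BS l := by
    intro i
    rw [ht1]
    simp only [Finset.mem_image, Finset.mem_filter]
    constructor
    · rintro ⟨y, ⟨hy, hy3⟩, rfl⟩
      rwa [show 3 * (y / 3) + 1 = y by omega]
    · intro h
      exact ⟨3 * i + 1, ⟨h, by omega⟩, by omega⟩
  have hmem2 : ∀ i, i ∈ t2 ↔ 3 * i + 2 ∈ BS l := by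
    intro i
    rw [ht2]
    simp only [Finset.mem_image, Finset.mem_filter]
    constructor
    · rintro ⟨y, ⟨hy, hy3⟩, rfl⟩
      rwa [show 3 * (y / 3) + 2 = y by omega]
    · intro h
      exact ⟨3 * i + 2, ⟨h, by omega⟩, by omega⟩
  have hd1 : t1 = Finset.range t1.card := by
    apply dclosed
    intro x hx
    rw [hmem1] at hx ⊢
    have := hclosed _ hx (by omega)
    rwa [show 3 * (x + 1) + 1 - 3 = 3 * x + 1 by omega] at this
  have hd2 : t2 = Finset.range t2.card := by
    apply dclosed
    intro x hx
    rw [hmem2] at hx ⊢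
    have := hclosed _ hx (by omega)
    rwa [show 3 * (x + 1) + 2 - 3 = 3 * x + 2 by omega] at this
  refine ⟨t1.card, t2.card, ?_⟩
  ext x
  rw [mem_Bab]
  constructor
  · intro hx
    have hx3 := hmod x hx
    rcases (by omega : x % 3 = 1 ∨ x % 3 = 2) with h | h
    · left
      refine ⟨h, ?_⟩
      have : x / 3 ∈ t1 := by rw [hmem1]; rwa [show 3 * (x / 3) + 1 = x by omega]
      rw [hd1, Finset.mem_range] at this
      omega
    · right
      refine ⟨h, ?_⟩
      have : x / 3 ∈ t2 := by rw [hmem2]; rwa [show 3 * (x / 3) + 2 = x by omega]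
      rw [hd2, Finset.mem_range] at this
      omega
  · rintro (⟨h1, h2⟩ | ⟨h1, h2⟩)
    · have : x / 3 ∈ t1 := by rw [hd1, Finset.mem_range]; omega
      rw [hmem1] at this
      rwa [show 3 * (x / 3) + 1 = x by omega] at this
    · have : x / 3 ∈ t2 := by rw [hd2, Finset.mem_range]; omega
      rw [hmem2] at this
      rwa [show 3 * (x / 3) + 2 = x by omega] at this

lemma hookset_ab {l : List ℕ} {a b : ℕ} (hl : IsPartitionList l) (hBS : BS l = Bab a b) {h : ℕ} :
    h ∈ hookset l ↔ (∃ t, t < max a (b - a) ∧ h = 3 * t + 1) ∨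
      (∃ t, t < max b (a - b - 1) ∧ h = 3 * t + 2) := by
  rw [hookset_eq hl]
  simp only [Set.mem_setOf_eq, hBS]
  constructor
  · rintro ⟨x, hx, c, hc, hcn, rfl⟩
    rw [mem_Bab] at hx hcn
    push_neg at hcn
    rcases hx with ⟨hx3, hxa⟩ | ⟨hx3, hxb⟩
    · -- x ≡ 1 mod 3
      rcases (by omega : c % 3 = 0 ∨ c % 3 = 1 ∨ c % 3 = 2) with h3 | h3 | h3
      · left
        exact ⟨(x - c - 1) / 3, by omega, by omega⟩
      · -- c ≥ 3a impossible since c < x < 3a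
        omega
      · -- c ≥ 3b, hook ≡ 2
        right
        exact ⟨(x - c - 2) / 3, by omega, by omega⟩
    · rcases (by omega : c % 3 = 0 ∨ c % 3 = 1 ∨ c % 3 = 2) with h3 | h3 | h3
      · right
        exact ⟨(x - c - 2) / 3, by omega, by omega⟩
      · left
        exact ⟨(x - c - 1) / 3, by omega, by omega⟩
      · omega
  · rintro (⟨t, ht, rfl⟩ | ⟨t, ht, rfl⟩)
    · rcases lt_or_ge t a with h | h
      · exact ⟨3 * t + 1, mem_Bab.2 (by omega), 0, by omega, by rw [mem_Bab]; omega, by omega⟩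
      · -- t < b - a, use x = 3(t+a)+2, c = 3a+1
        exact ⟨3 * (t + a) + 2, mem_Bab.2 (by omega), 3 * a + 1, by omega,
          by rw [mem_Bab]; omega, by omega⟩
    · rcases lt_or_ge t b with h | h
      · exact ⟨3 * t + 2, mem_Bab.2 (by omega), 0, by omega, by rw [mem_Bab]; omega, by omega⟩
      · exact ⟨3 * (t + b + 1) + 1, mem_Bab.2 (by omega), 3 * b + 2, by omega,
          by rw [mem_Bab]; omega, by omega⟩

lemma core_of_ab {l : List ℕ} {a b : ℕ} (hl : IsPartitionList l) (hBS : BS l = Bab a b) :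
    IsCore l 3 := by
  intro h hh
  rw [hookset_ab hl hBS] at hh
  rcases hh with ⟨t, _, rfl⟩ | ⟨t, _, rfl⟩ <;> omega

lemma complete_iff {l : List ℕ} {a b : ℕ} (hl : IsPartitionList l) (hBS : BS l = Bab a b)
    (hab : 1 ≤ a + b) :
    (∃ N : ℕ, hookset l = {h | 0 < h ∧ ¬ 3 ∣ h ∧ h ≤ N}) ↔
      (max a (b - a) = max b (a - b - 1) ∨ max a (b - a) = max b (a - b - 1) + 1) := by
  set A := max a (b - a) with hA
  set B2 := max b (a - b - 1) with hB2
  have hA1 : 1 ≤ A := by omega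
  constructor
  · rintro ⟨N, hN⟩
    have hmem : ∀ h : ℕ, h ∈ hookset l ↔ (0 < h ∧ ¬ 3 ∣ h ∧ h ≤ N) := fun h => by
      rw [hN]; rfl
    have h1 : (3 * (A - 1) + 1) ∈ hookset l := by
      rw [hookset_ab hl hBS]
      left; exact ⟨A - 1, by omega, rfl⟩
    rw [hmem] at h1
    have h2 : (3 * A + 1) ∉ hookset l := by
      rw [hookset_ab hl hBS]
      rintro (⟨t, ht, hte⟩ | ⟨t, ht, hte⟩) <;> omega
    rw [hmem] at h2
    push_neg at h2
    have h2' : N < 3 * A + 1 := h2 (by omega) (by omega)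
    rcases Nat.eq_zero_or_pos B2 with hB0 | hB0
    · -- B2 = 0 : 2 ∉ hookset so N ≤ 1, hence A = 1
      have h3 : (2 : ℕ) ∉ hookset l := by
        rw [hookset_ab hl hBS]
        rintro (⟨t, ht, hte⟩ | ⟨t, ht, hte⟩) <;> omega
      rw [hmem] at h3
      push_neg at h3
      have := h3 (by omega) (by omega)
      omega
    · have h3 : (3 * (B2 - 1) + 2) ∈ hookset l := by
        rw [hookset_ab hl hBS]
        right; exact ⟨B2 - 1, by omega, rfl⟩
      rw [hmem] at h3
      have h4 : (3 * B2 + 2) ∉ hookset l := by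
        rw [hookset_ab hl hBS]
        rintro (⟨t, ht, hte⟩ | ⟨t, ht, hte⟩) <;> omega
      rw [hmem] at h4
      push_neg at h4
      have h4' : N < 3 * B2 + 2 := h4 (by omega) (by omega)
      omega
  · intro hcase
    refine ⟨if A = B2 then 3 * A - 1 else 3 * A - 2, ?_⟩
    ext h
    rw [Set.mem_setOf_eq, hookset_ab hl hBS]
    constructor
    · rintro (⟨t, ht, rfl⟩ | ⟨t, ht, rfl⟩) <;> split <;> omega
    · rintro ⟨hp, hd, hle⟩
      rcases (by omega : h % 3 = 1 ∨ h % 3 = 2) with h3 | h3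
      · left
        refine ⟨h / 3, ?_, by omega⟩
        split at hle <;> omega
      · right
        refine ⟨h / 3, ?_, by omega⟩
        split at hle <;> omega

lemma list_sum_eq {l : List ℕ} : l.sum = ∑ i ∈ Finset.range l.length, l.getD i 0 := by
  induction l with
  | nil => simp
  | cons x t ih =>
    rw [List.sum_cons, List.length_cons, Finset.sum_range_succ', ih]
    simp only [List.getD_cons_succ, List.getD_cons_zero]
    ring

lemma two_sum {l : List ℕ} (hl : IsPartitionList l) :
    2 * l.sum + l.length * (l.length - 1) = 2 * ∑ x ∈ BS l, x := by
  have h1 : ∑ x ∈ BS l, x = ∑ i ∈ Finset.range l.length, bet l i := by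
    rw [BS, Finset.sum_image]
    intro i hi j hj hij
    rw [Finset.mem_coe, Finset.mem_range] at hi hj
    by_contra hne
    rcases lt_or_gt_of_ne hne with h | h
    · exact absurd hij (ne_of_gt (bet_strict_anti hl h hj))
    · exact absurd hij (ne_of_lt (bet_strict_anti hl h hi))
  have h2 : ∑ i ∈ Finset.range l.length, bet l i =
      (∑ i ∈ Finset.range l.length, l.getD i 0) +
        ∑ i ∈ Finset.range l.length, (l.length - 1 - i) := by
    simp only [bet, Finset.sum_add_distrib]
  have h3 : ∑ i ∈ Finset.range l.length, (l.length - 1 - i) =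
      ∑ i ∈ Finset.range l.length, i := Finset.sum_range_reflect (fun i => i) l.length
  have h4 := Finset.sum_range_id_mul_two l.length
  rw [h1, h2, h3, ← list_sum_eq]
  omega

lemma two_sum_Bab (a b : ℕ) : 2 * (∑ x ∈ Bab a b, x) + a = 3 * a * a + 3 * b * b + b := by
  have hd : Disjoint ((Finset.range a).image (fun i => 3 * i + 1))
      ((Finset.range b).image (fun i => 3 * i + 2)) := by
    rw [Finset.disjoint_left]
    rintro x hx hy
    simp only [Finset.mem_image, Finset.mem_range] at hx hy
    obtain ⟨i, _, rfl⟩ := hx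
    obtain ⟨i', _, h⟩ := hy
    omega
  rw [Bab, Finset.sum_union hd, Finset.sum_image (by intro i _ j _ h; simp only at h; omega),
    Finset.sum_image (by intro i _ j _ h; simp only at h; omega)]
  have e1 : ∑ i ∈ Finset.range a, (3 * i + 1) = 3 * (∑ i ∈ Finset.range a, i) + a := by
    rw [Finset.sum_add_distrib, ← Finset.mul_sum]
    simp
  have e2 : ∑ i ∈ Finset.range b, (3 * i + 2) = 3 * (∑ i ∈ Finset.range b, i) + 2 * b := by
    rw [Finset.sum_add_distrib, ← Finset.mul_sum, Finset.sum_const, Finset.card_range,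
      smul_eq_mul]
    ring
  have g1 := Finset.sum_range_id_mul_two a
  have g2 := Finset.sum_range_id_mul_two b
  have q1 : a * (a - 1) + a = a * a := by cases a with
    | zero => simp
    | succ n => simp only [Nat.add_sub_cancel]; ring
  have q2 : b * (b - 1) + b = b * b := by cases b with
    | zero => simp
    | succ n => simp only [Nat.add_sub_cancel]; ring
  rw [e1, e2]
  linarith

lemma sum_param {l : List ℕ} {a b : ℕ} (hl : IsPartitionList l) (hBS : BS l = Bab a b) :
    2 * l.sum + (a + b) * (a + b - 1) + a = 3 * a * a + 3 * b * b + b := by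
  have hm : l.length = a + b := by
    rw [← card_BS hl, hBS, card_Bab]
  have h1 := two_sum hl
  have h2 := two_sum_Bab a b
  rw [hm, hBS] at h1
  linarith

def F1 (k : ℕ) : List ℕ := (List.range k).map (fun i => 2 * (k - i) - 1)
def F2 (k : ℕ) : List ℕ := (List.range k).map (fun i => 2 * (k - i))
def F3 (k : ℕ) : List ℕ := (List.range (2 * k)).map (fun i => k - i / 2)
def F4 (k : ℕ) : List ℕ := (List.range (2 * k - 1)).map (fun i => k - (i + 1) / 2)

lemma getD_mapRange {m : ℕ} {f : ℕ → ℕ} {i : ℕ} (hi : i < m) :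
    ((List.range m).map f).getD i 0 = f i := by
  rw [getD_lt _ _ (by simpa using hi)]
  simp

lemma partition_mapRange {m : ℕ} {f : ℕ → ℕ} (hmono : ∀ i j, i ≤ j → j < m → f j ≤ f i)
    (hpos : ∀ i, i < m → 0 < f i) : IsPartitionList ((List.range m).map f) := by
  constructor
  · rw [List.pairwise_iff_getElem]
    intro i j hi hj hij
    simp only [List.length_map, List.length_range] at hi hj
    simp only [List.getElem_map, List.getElem_range]
    exact hmono i j (le_of_lt hij) hj
  · intro p hp
    rw [List.mem_map] at hp
    obtain ⟨i, hi, rfl⟩ := hp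
    rw [List.mem_range] at hi
    exact hpos i hi

lemma mem_BS_mapRange {m : ℕ} {f : ℕ → ℕ} {x : ℕ} :
    x ∈ BS ((List.range m).map f) ↔ ∃ i, i < m ∧ f i + (m - 1 - i) = x := by
  rw [mem_BS]
  constructor
  · rintro ⟨i, hi, rfl⟩
    simp only [List.length_map, List.length_range] at hi
    refine ⟨i, hi, ?_⟩
    rw [bet, getD_mapRange hi]
    simp
  · rintro ⟨i, hi, rfl⟩
    refine ⟨i, by simpa using hi, ?_⟩
    rw [bet, getD_mapRange hi]
    simp

lemma BS_F1 (k : ℕ) : BS (F1 k) = Bab k 0 := by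
  ext x
  rw [F1, mem_BS_mapRange, mem_Bab]
  constructor
  · rintro ⟨i, hi, rfl⟩
    left; omega
  · rintro (⟨h1, h2⟩ | ⟨h1, h2⟩)
    · exact ⟨k - 1 - x / 3, by omega, by omega⟩
    · omega

lemma BS_F2 (k : ℕ) : BS (F2 k) = Bab 0 k := by
  ext x
  rw [F2, mem_BS_mapRange, mem_Bab]
  constructor
  · rintro ⟨i, hi, rfl⟩
    right; omega
  · rintro (⟨h1, h2⟩ | ⟨h1, h2⟩)
    · omega
    · exact ⟨k - 1 - x / 3, by omega, by omega⟩

lemma BS_F3 (k : ℕ) : BS (F3 k) = Bab k k := by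
  ext x
  rw [F3, mem_BS_mapRange, mem_Bab]
  constructor
  · rintro ⟨i, hi, rfl⟩
    omega
  · rintro (⟨h1, h2⟩ | ⟨h1, h2⟩)
    · exact ⟨2 * (k - 1 - x / 3) + 1, by omega, by omega⟩
    · exact ⟨2 * (k - 1 - x / 3), by omega, by omega⟩

lemma BS_F4 {k : ℕ} (hk : 1 ≤ k) : BS (F4 k) = Bab k (k - 1) := by
  ext x
  rw [F4, mem_BS_mapRange, mem_Bab]
  constructor
  · rintro ⟨i, hi, rfl⟩
    omega
  · rintro (⟨h1, h2⟩ | ⟨h1, h2⟩)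
    · exact ⟨2 * (k - 1 - x / 3), by omega, by omega⟩
    · exact ⟨2 * (k - 1 - x / 3) - 1, by omega, by omega⟩

lemma part_F1 (k : ℕ) : IsPartitionList (F1 k) :=
  partition_mapRange (fun i j hij hj => by omega) (fun i hi => by omega)
lemma part_F2 (k : ℕ) : IsPartitionList (F2 k) :=
  partition_mapRange (fun i j hij hj => by omega) (fun i hi => by omega)
lemma part_F3 (k : ℕ) : IsPartitionList (F3 k) :=
  partition_mapRange (fun i j hij hj => by omega) (fun i hi => by omega)
lemma part_F4 (k : ℕ) : IsPartitionList (F4 k) :=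
  partition_mapRange (fun i j hij hj => by omega) (fun i hi => by omega)

lemma BS_inj {l₁ l₂ : List ℕ} (h₁ : IsPartitionList l₁) (h₂ : IsPartitionList l₂)
    (h : BS l₁ = BS l₂) : l₁ = l₂ := by
  have hlen : l₁.length = l₂.length := by
    rw [← card_BS h₁, ← card_BS h₂, h]
  have hb : ∀ l : List ℕ, IsPartitionList l →
      ((List.range l.length).map (bet l)).Pairwise (· > ·) := by
    intro l hl
    rw [List.pairwise_iff_getElem]
    intro i j hi hj hij
    simp only [List.length_map, List.length_range] at hi hj
    simp only [List.getElem_map, List.getElem_range]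
    exact bet_strict_anti hl hij hj
  have htf : ∀ l : List ℕ, ((List.range l.length).map (bet l)).toFinset = BS l := by
    intro l
    ext x
    simp [mem_BS, eq_comm]
  have hperm : List.Perm ((List.range l₁.length).map (bet l₁))
      ((List.range l₂.length).map (bet l₂)) := by
    apply List.perm_of_nodup_nodup_toFinset_eq ((hb l₁ h₁).nodup) ((hb l₂ h₂).nodup)
    rw [htf, htf, h]
  have heq := List.Perm.eq_of_pairwise (fun a b _ _ h1 h2 => (lt_irrefl _ (lt_trans h1 h2)).elim) (hb l₁ h₁) (hb l₂ h₂) hperm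
  apply List.ext_getElem hlen
  intro i hi1 hi2
  have : bet l₁ i = bet l₂ i := by
    have h' := congrArg (fun L : List ℕ => L.getD i 0) heq
    rwa [getD_mapRange hi1, getD_mapRange hi2] at h'
  rw [bet, bet, getD_lt _ _ hi1, getD_lt _ _ hi2] at this
  omega


lemma mul_pred_add (a : ℕ) : a * (a - 1) + a = a * a := by
  cases a with
  | zero => simp
  | succ n => simp only [Nat.add_sub_cancel]; ring

lemma nval1 {l : List ℕ} {k : ℕ} (hl : IsPartitionList l) (hBS : BS l = Bab k 0) :
    l.sum = k ^ 2 := by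
  have h := sum_param hl hBS
  have q := mul_pred_add k
  have e : k ^ 2 = k * k := by ring
  rw [e]
  simp only [Nat.add_zero, Nat.mul_zero, Nat.zero_mul] at h
  linarith

lemma nval2 {l : List ℕ} {k : ℕ} (hl : IsPartitionList l) (hBS : BS l = Bab 0 k) :
    l.sum = k ^ 2 + k := by
  have h := sum_param hl hBS
  have q := mul_pred_add k
  have e : k ^ 2 = k * k := by ring
  rw [e]
  simp only [Nat.zero_add, Nat.add_zero, Nat.mul_zero, Nat.zero_mul] at h
  linarith

lemma nval3 {l : List ℕ} {k : ℕ} (hl : IsPartitionList l) (hBS : BS l = Bab k k) :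
    l.sum = k ^ 2 + k := by
  have h := sum_param hl hBS
  have q := mul_pred_add (k + k)
  have e : k ^ 2 = k * k := by ring
  rw [e]
  linarith

lemma nval4 {l : List ℕ} {k : ℕ} (hl : IsPartitionList l) (hk : 1 ≤ k)
    (hBS : BS l = Bab k (k - 1)) : l.sum = k ^ 2 := by
  obtain ⟨j, rfl⟩ : ∃ j, k = j + 1 := ⟨k - 1, by omega⟩
  have h := sum_param hl (by simpa using hBS)
  rw [show j + 1 + j - 1 = 2 * j from by omega] at h
  have e : (j + 1) ^ 2 = j * j + 2 * j + 1 := by ring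
  rw [e]
  linarith

lemma master {n : ℕ} (hn : 2 ≤ n) (l : List ℕ) :
    (IsPartitionList l ∧ l.sum = n ∧ CompleteHookset3 l) ↔
      ((∃ k, 2 ≤ k ∧ n = k ^ 2 ∧ (l = F1 k ∨ l = F4 k)) ∨
       (∃ k, 1 ≤ k ∧ n = k ^ 2 + k ∧ (l = F2 k ∨ l = F3 k))) := by
  constructor
  · rintro ⟨hl, hsum, hcore, N, hNeq⟩
    obtain ⟨a, b, hBS⟩ := core_BS hl hcore
    have hne : l ≠ [] := by
      rintro rfl
      simp at hsum
      omega
    have hab1 : 1 ≤ a + b := by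
      have h1 : 0 < l.length := List.length_pos_iff.2 hne
      have h2 : l.length = a + b := by rw [← card_BS hl, hBS, card_Bab]
      omega
    have hsh := (complete_iff hl hBS hab1).1 ⟨N, hNeq⟩
    have hcases : (b = a ∧ 1 ≤ a) ∨ (a = 0 ∧ 1 ≤ b) ∨ (b = 0 ∧ 1 ≤ a) ∨
        (b + 1 = a ∧ 1 ≤ a) := by omega
    rcases hcases with ⟨rfl, ha⟩ | ⟨rfl, hb⟩ | ⟨rfl, ha⟩ | ⟨hba, ha⟩
    · -- l = F3 b
      have hleq : l = F3 b := BS_inj hl (part_F3 b) (by rw [hBS, BS_F3])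
      right
      exact ⟨b, ha, by rw [← hsum, nval3 hl hBS], Or.inr hleq⟩
    · -- l = F2 b
      have hleq : l = F2 b := BS_inj hl (part_F2 b) (by rw [hBS, BS_F2])
      right
      exact ⟨b, hb, by rw [← hsum, nval2 hl hBS], Or.inl hleq⟩
    · -- l = F1 a
      have hleq : l = F1 a := BS_inj hl (part_F1 a) (by rw [hBS, BS_F1])
      have hnv : n = a ^ 2 := by rw [← hsum, nval1 hl hBS]
      have ha2 : 2 ≤ a := by
        by_contra hcon
        have : a = 1 := by omega
        subst this
        simp at hnv
        omega
      exact Or.inl ⟨a, ha2, hnv, Or.inl hleq⟩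
    · -- l = F4 a
      have hb : b = a - 1 := by omega
      subst hb
      have hleq : l = F4 a := BS_inj hl (part_F4 a) (by rw [hBS, BS_F4 ha])
      have hnv : n = a ^ 2 := by rw [← hsum, nval4 hl ha hBS]
      have ha2 : 2 ≤ a := by
        by_contra hcon
        have : a = 1 := by omega
        subst this
        simp at hnv
        omega
      exact Or.inl ⟨a, ha2, hnv, Or.inr hleq⟩
  · rintro (⟨k, hk, rfl, (rfl | rfl)⟩ | ⟨k, hk, rfl, (rfl | rfl)⟩)
    · refine ⟨part_F1 k, nval1 (part_F1 k) (BS_F1 k), core_of_ab (part_F1 k) (BS_F1 k), ?_⟩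
      exact (complete_iff (part_F1 k) (BS_F1 k) (by omega)).2 (by omega)
    · refine ⟨part_F4 k, nval4 (part_F4 k) (by omega) (BS_F4 (by omega)),
        core_of_ab (part_F4 k) (BS_F4 (by omega)), ?_⟩
      exact (complete_iff (part_F4 k) (BS_F4 (by omega)) (by omega)).2 (by omega)
    · refine ⟨part_F2 k, nval2 (part_F2 k) (BS_F2 k), core_of_ab (part_F2 k) (BS_F2 k), ?_⟩
      exact (complete_iff (part_F2 k) (BS_F2 k) (by omega)).2 (by omega)
    · refine ⟨part_F3 k, nval3 (part_F3 k) (BS_F3 k), core_of_ab (part_F3 k) (BS_F3 k), ?_⟩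
      exact (complete_iff (part_F3 k) (BS_F3 k) (by omega)).2 (by omega)

lemma sq_ne {i j : ℕ} (hj : 1 ≤ j) : i ^ 2 ≠ j ^ 2 + j := by
  rcases le_or_gt i j with h | h
  · have := Nat.pow_le_pow_left h 2
    omega
  · have h2 : j + 1 ≤ i := h
    have := Nat.pow_le_pow_left h2 2
    have e : (j + 1) ^ 2 = j ^ 2 + 2 * j + 1 := by ring
    omega

lemma sq_inj {i j : ℕ} (h : i ^ 2 = j ^ 2) : i = j := by
  rcases lt_trichotomy i j with h' | h' | h'
  · have := Nat.pow_lt_pow_left h' (n := 2) (by norm_num)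
    omega
  · exact h'
  · have := Nat.pow_lt_pow_left h' (n := 2) (by norm_num)
    omega

lemma sqadd_inj {i j : ℕ} (h : i ^ 2 + i = j ^ 2 + j) : i = j := by
  rcases lt_trichotomy i j with h' | h' | h'
  · have := Nat.pow_lt_pow_left h' (n := 2) (by norm_num)
    omega
  · exact h'
  · have := Nat.pow_lt_pow_left h' (n := 2) (by norm_num)
    omega

lemma len_F1 (k : ℕ) : (F1 k).length = k := by simp [F1]
lemma len_F2 (k : ℕ) : (F2 k).length = k := by simp [F2]
lemma len_F3 (k : ℕ) : (F3 k).length = 2 * k := by simp [F3]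
lemma len_F4 (k : ℕ) : (F4 k).length = 2 * k - 1 := by simp [F4]

theorem stmt14 (n : ℕ) (hn : 2 ≤ n) :
    ((∃ k : ℕ, 2 ≤ k ∧ (n = k ^ 2 ∨ n = k ^ 2 - k)) →
      {l : List ℕ | IsPartitionList l ∧ l.sum = n ∧ CompleteHookset3 l}.ncard = 2) ∧
    (¬ (∃ k : ℕ, 2 ≤ k ∧ (n = k ^ 2 ∨ n = k ^ 2 - k)) →
      {l : List ℕ | IsPartitionList l ∧ l.sum = n ∧ CompleteHookset3 l}.ncard = 0) := by
  constructor
  · rintro ⟨k₀, hk₀, hcase⟩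
    rcases hcase with rfl | hnv
    · -- n = k₀ ^ 2
      have hset : {l : List ℕ | IsPartitionList l ∧ l.sum = k₀ ^ 2 ∧ CompleteHookset3 l} =
          {F1 k₀, F4 k₀} := by
        ext l
        rw [Set.mem_setOf_eq, master hn l]
        constructor
        · rintro (⟨k, hk2, hnk, hl⟩ | ⟨k, hk1, hnk, hl⟩)
          · have : k = k₀ := sq_inj hnk.symm
            subst this
            rcases hl with rfl | rfl
            · exact Set.mem_insert _ _
            · exact Set.mem_insert_of_mem _ rfl
          · exact absurd hnk (sq_ne hk1)
        · rintro (rfl | rfl)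
          · exact Or.inl ⟨k₀, hk₀, rfl, Or.inl rfl⟩
          · exact Or.inl ⟨k₀, hk₀, rfl, Or.inr rfl⟩
      rw [hset]
      apply Set.ncard_pair
      intro h
      have := congrArg List.length h
      rw [len_F1, len_F4] at this
      omega
    · -- n = k₀ ^ 2 - k₀
      set j := k₀ - 1 with hj
      have hnj : n = j ^ 2 + j := by
        have e : k₀ ^ 2 = j ^ 2 + 2 * j + 1 := by rw [show k₀ = j + 1 from by omega]; ring
        omega
      have hj1 : 1 ≤ j := by
        by_contra hcon
        have : j = 0 := by omega
        rw [this] at hnj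
        omega
      have hset : {l : List ℕ | IsPartitionList l ∧ l.sum = n ∧ CompleteHookset3 l} =
          {F2 j, F3 j} := by
        ext l
        rw [Set.mem_setOf_eq, master hn l]
        constructor
        · rintro (⟨k, hk2, hnk, hl⟩ | ⟨k, hk1, hnk, hl⟩)
          · exact absurd (hnj ▸ hnk).symm (sq_ne hj1)
          · have : k = j := sqadd_inj (by omega)
            subst this
            rcases hl with rfl | rfl
            · exact Set.mem_insert _ _
            · exact Set.mem_insert_of_mem _ rfl
        · rintro (rfl | rfl)
          · exact Or.inr ⟨j, hj1, hnj, Or.inl rfl⟩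
          · exact Or.inr ⟨j, hj1, hnj, Or.inr rfl⟩
      rw [hset]
      apply Set.ncard_pair
      intro h
      have := congrArg List.length h
      rw [len_F2, len_F3] at this
      omega
  · intro hno
    have hset : {l : List ℕ | IsPartitionList l ∧ l.sum = n ∧ CompleteHookset3 l} = ∅ := by
      ext l
      rw [Set.mem_setOf_eq, master hn l]
      simp only [Set.mem_empty_iff_false, iff_false]
      rintro (⟨k, hk2, hnk, _⟩ | ⟨k, hk1, hnk, _⟩)
      · exact hno ⟨k, hk2, Or.inl hnk⟩
      · refine hno ⟨k + 1, by omega, Or.inr ?_⟩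
        have e : (k + 1) ^ 2 = k ^ 2 + 2 * k + 1 := by ring
        omega
    rw [hset, Set.ncard_empty]
end
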